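/- Let Z₁, …, Z_p be i.i.d. standard normal random variables on ℝ, p ≥ 2, and let Z_(1) ≥ Z_(2) be the two largest order statistics of (|Z₁|, …, |Z_p|). Then the statistic (1 − Φ(Z_(1)))/(1 − Φ(Z_(2))) is uniformly distributed on [0,1], where Φ is the standard normal CDF. -/

import Mathlib

open MeasureTheory ProbabilityTheory Set
open scoped NNReal ENNReal

namespace KacRiceAux


noncomputable def Phi (x : ℝ) : ℝ := ((gaussianReal 0 1) (Set.Iic x)).toReal

lemma gauss_le_vol (s : Set ℝ) : gaussianReal 0 1 s ≤ volume s := by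
  rw [gaussianReal_apply 0 one_ne_zero s]
  calc ∫⁻ x in s, gaussianPDF 0 1 x ∂volume ≤ ∫⁻ _ in s, 1 ∂volume := by
        refine lintegral_mono fun x => ?_
        unfold gaussianPDF
        refine ENNReal.ofReal_le_one.mpr ?_
        unfold gaussianPDFReal
        have hpi : (1:ℝ) ≤ Real.sqrt (2 * Real.pi * (1:ℝ≥0)) := by
          rw [show (1:ℝ) = Real.sqrt 1 from Real.sqrt_one.symm]
          refine Real.sqrt_le_sqrt ?_
          have := Real.pi_gt_three
          push_cast
          nlinarith
        have h1 : (Real.sqrt (2 * Real.pi * (1:ℝ≥0)))⁻¹ ≤ 1 := by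
          rw [inv_le_one_iff₀]; right; exact hpi
        have h2 : Real.exp (-(x - 0)^2 / (2 * (1:ℝ≥0))) ≤ 1 := by
          rw [Real.exp_le_one_iff]
          have : (0:ℝ) ≤ (x - 0)^2 := sq_nonneg _
          push_cast
          nlinarith
        have h0 : (0:ℝ) ≤ (Real.sqrt (2 * Real.pi * (1:ℝ≥0)))⁻¹ := by positivity
        nlinarith [Real.exp_pos (-(x - 0)^2 / (2 * (1:ℝ≥0)))]
      _ = volume s := by simp

instance : NullSingletonClass (gaussianReal 0 1) :=
  ⟨fun a => le_antisymm ((gauss_le_vol {a}).trans (by simp)) zero_le⟩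

lemma Phi_mono : Monotone Phi := fun x y h =>
  ENNReal.toReal_mono (measure_ne_top _ _) (measure_mono (Set.Iic_subset_Iic.2 h))

lemma Phi_diff {x y : ℝ} (h : x ≤ y) :
    Phi y - Phi x = ((gaussianReal 0 1) (Set.Ioc x y)).toReal := by
  have hu : Set.Iic x ∪ Set.Ioc x y = Set.Iic y := Set.Iic_union_Ioc_eq_Iic h
  have hm : (gaussianReal 0 1) (Set.Iic x ∪ Set.Ioc x y) =
      (gaussianReal 0 1) (Set.Iic x) + (gaussianReal 0 1) (Set.Ioc x y) :=
    measure_union (Set.Iic_disjoint_Ioc le_rfl) measurableSet_Ioc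
  rw [hu] at hm
  unfold Phi
  rw [hm, ENNReal.toReal_add (measure_ne_top _ _) (measure_ne_top _ _)]
  ring

lemma Phi_lip {x y : ℝ} (h : x ≤ y) : Phi y - Phi x ≤ y - x := by
  rw [Phi_diff h]
  have h1 := gauss_le_vol (Set.Ioc x y)
  rw [Real.volume_Ioc] at h1
  calc ((gaussianReal 0 1) (Set.Ioc x y)).toReal
      ≤ (ENNReal.ofReal (y - x)).toReal :=
        ENNReal.toReal_mono ENNReal.ofReal_ne_top h1
    _ = y - x := ENNReal.toReal_ofReal (by linarith)

lemma Phi_continuous : Continuous Phi := by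
  have : LipschitzWith 1 Phi := by
    refine LipschitzWith.of_dist_le_mul fun x y => ?_
    rw [Real.dist_eq, Real.dist_eq, NNReal.coe_one, one_mul]
    rcases le_total x y with h | h
    · rw [abs_of_nonpos (by linarith [Phi_mono h]), abs_of_nonpos (by linarith)]
      have := Phi_lip h; linarith
    · rw [abs_of_nonneg (by linarith [Phi_mono h]), abs_of_nonneg (by linarith)]
      have := Phi_lip h; linarith
  exact this.continuous

lemma gauss_pos_Ioc {x y : ℝ} (h : x < y) : (gaussianReal 0 1) (Set.Ioc x y) ≠ 0 := by
  intro h0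
  have hv := gaussianReal_absolutelyContinuous' 0 one_ne_zero h0
  rw [Real.volume_Ioc] at hv
  rw [ENNReal.ofReal_eq_zero] at hv
  linarith

lemma Phi_lt_Phi {x y : ℝ} (h : x < y) : Phi x < Phi y := by
  have h1 := Phi_diff h.le
  have h2 : 0 < ((gaussianReal 0 1) (Set.Ioc x y)).toReal :=
    ENNReal.toReal_pos (gauss_pos_Ioc h) (measure_ne_top _ _)
  linarith

lemma Phi_lt_one (x : ℝ) : Phi x < 1 := by
  have h2 : (gaussianReal 0 1) (Set.Iic x) + (gaussianReal 0 1) (Set.Ioi x) = 1 := by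
    rw [← measure_union (Set.Iic_disjoint_Ioi le_rfl) measurableSet_Ioi,
      Set.Iic_union_Ioi, measure_univ]
  have h3 : (gaussianReal 0 1) (Set.Ioi x) ≠ 0 := by
    intro h0
    exact gauss_pos_Ioc (lt_add_one x) (measure_mono_null Set.Ioc_subset_Ioi_self h0)
  have h4 : 0 < ((gaussianReal 0 1) (Set.Ioi x)).toReal :=
    ENNReal.toReal_pos h3 (measure_ne_top _ _)
  have h5 : Phi x + ((gaussianReal 0 1) (Set.Ioi x)).toReal = 1 := by
    unfold Phi
    rw [← ENNReal.toReal_add (measure_ne_top _ _) (measure_ne_top _ _), h2, ENNReal.toReal_one]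
  linarith

lemma gauss_neg (x : ℝ) : gaussianReal 0 1 (Set.Iic (-x)) = gaussianReal 0 1 (Set.Ici x) := by
  have hmap := gaussianReal_map_const_mul (μ := 0) (v := 1) (-1)
  have hvar : NNReal.mk ((-1:ℝ)^2) (sq_nonneg _) = 1 := by
    ext; show (-1:ℝ)^2 = 1; norm_num
  rw [hvar, one_mul, mul_zero] at hmap
  have hpre : (fun y : ℝ => (-1:ℝ) * y) ⁻¹' (Set.Ici x) = Set.Iic (-x) := by
    ext y
    simp only [Set.mem_preimage, Set.mem_Ici, Set.mem_Iic, neg_one_mul]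
    constructor <;> intro h <;> linarith
  calc gaussianReal 0 1 (Set.Iic (-x)) = gaussianReal 0 1 ((fun y : ℝ => (-1:ℝ) * y) ⁻¹' (Set.Ici x)) := by rw [hpre]
    _ = (Measure.map (fun y : ℝ => (-1:ℝ) * y) (gaussianReal 0 1)) (Set.Ici x) :=
        (Measure.map_apply (measurable_const_mul _) measurableSet_Ici).symm
    _ = gaussianReal 0 1 (Set.Ici x) := by rw [hmap]

lemma gauss_Ici (x : ℝ) :
    gaussianReal 0 1 (Set.Ici x) = 1 - gaussianReal 0 1 (Set.Iic x) := by
  have h4 : gaussianReal 0 1 (Set.Ici x) = gaussianReal 0 1 (Set.Ioi x) :=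
    (measure_congr (Ioi_ae_eq_Ici (μ := gaussianReal 0 1) (a := x))).symm
  rw [h4, ← Set.compl_Iic, measure_compl measurableSet_Iic (measure_ne_top _ _), measure_univ]

lemma Phi_zero : Phi 0 = 1/2 := by
  have h1 : gaussianReal 0 1 (Set.Iic (-(0:ℝ))) = gaussianReal 0 1 (Set.Ici 0) := gauss_neg 0
  rw [neg_zero, gauss_Ici] at h1
  unfold Phi
  have h1' := congrArg ENNReal.toReal h1
  rw [ENNReal.toReal_sub_of_le prob_le_one ENNReal.one_ne_top, ENNReal.toReal_one] at h1'
  linarith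


lemma Phi_tendsto : Filter.Tendsto Phi Filter.atTop (nhds 1) := by
  have h1 := tendsto_measure_Iic_atTop (gaussianReal 0 1)
  rw [measure_univ] at h1
  have h2 := (ENNReal.tendsto_toReal ENNReal.one_ne_top).comp h1
  rw [ENNReal.toReal_one] at h2
  exact h2

lemma exists_Phi_eq {t : ℝ} (h1 : 1/2 ≤ t) (h2 : t < 1) : ∃ c, 0 ≤ c ∧ Phi c = t := by
  have hev : ∀ᶠ b in Filter.atTop, t < Phi b := Phi_tendsto.eventually (eventually_gt_nhds h2)
  obtain ⟨b, hb⟩ := hev.exists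
  have hb' : t < Phi (max b 0) := lt_of_lt_of_le hb (Phi_mono (le_max_left b 0))
  have hIVT := intermediate_value_Icc (le_max_right b 0) (Phi_continuous.continuousOn)
  have ht : t ∈ Icc (Phi 0) (Phi (max b 0)) := ⟨by rw [Phi_zero]; exact h1, hb'.le⟩
  obtain ⟨c, hc, hct⟩ := hIVT ht
  exact ⟨c, hc.1, hct⟩

noncomputable def fg (z : ℝ) : ℝ := 2 * (1 - Phi |z|)

lemma fg_meas : Measurable fg :=
  (measurable_const.sub (Phi_continuous.measurable.comp measurable_abs)).const_mul 2

lemma fg_pos (z : ℝ) : 0 < fg z := by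
  have := Phi_lt_one |z|; unfold fg; linarith

lemma fg_le_one (z : ℝ) : fg z ≤ 1 := by
  have := Phi_mono (abs_nonneg z)
  rw [Phi_zero] at this; unfold fg; linarith

lemma lunif_Iic (t : ℝ) :
    volume.restrict (Icc (0:ℝ) 1) (Iic t) = ENNReal.ofReal (min t 1) := by
  rw [Measure.restrict_apply measurableSet_Iic]
  have h : Iic t ∩ Icc (0:ℝ) 1 = Icc 0 (min t 1) := by
    ext x
    simp only [Set.mem_inter_iff, Set.mem_Iic, Set.mem_Icc, le_min_iff]
    tauto
  rw [h, Real.volume_Icc, sub_zero]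

instance : IsProbabilityMeasure (volume.restrict (Icc (0:ℝ) 1)) := by
  constructor
  rw [Measure.restrict_apply_univ, Real.volume_Icc]
  norm_num

lemma map_fg : Measure.map fg (gaussianReal 0 1) = volume.restrict (Icc 0 1) := by
  have hpm : IsProbabilityMeasure (Measure.map fg (gaussianReal 0 1)) :=
    Measure.isProbabilityMeasure_map fg_meas.aemeasurable
  refine Measure.ext_of_Iic _ _ fun t => ?_
  rw [Measure.map_apply fg_meas measurableSet_Iic, lunif_Iic]
  rcases le_or_gt t 0 with ht | ht
  · have he : fg ⁻¹' (Iic t) = ∅ := by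
      ext z; simp only [Set.mem_preimage, Set.mem_Iic, Set.mem_empty_iff_false, iff_false, not_le]
      exact lt_of_le_of_lt ht (fg_pos z)
    rw [he, measure_empty, Eq.comm, ENNReal.ofReal_eq_zero]
    exact le_trans (min_le_left t 1) ht
  rcases le_or_gt 1 t with ht1 | ht1
  · have he : fg ⁻¹' (Iic t) = univ := by
      ext z; simp only [Set.mem_preimage, Set.mem_Iic, Set.mem_univ, iff_true]
      exact (fg_le_one z).trans ht1
    rw [he, measure_univ, min_eq_right ht1, ENNReal.ofReal_one]
  · obtain ⟨c, hc0, hPc⟩ := exists_Phi_eq (t := 1 - t/2) (by linarith) (by linarith)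
    have hcpos : 0 < c := by
      by_contra hcl
      push_neg at hcl
      have := Phi_mono hcl
      rw [Phi_zero, hPc] at this
      linarith
    have hset : fg ⁻¹' (Iic t) = Iic (-c) ∪ Ici c := by
      ext z
      simp only [Set.mem_preimage, Set.mem_Iic, Set.mem_union, Set.mem_Ici]
      constructor
      · intro h
        have h1 : Phi c ≤ Phi |z| := by unfold fg at h; rw [hPc]; linarith
        have h2 : c ≤ |z| := by
          by_contra h3
          push_neg at h3
          exact absurd h1 (not_le.2 (Phi_lt_Phi h3))
        rcases le_abs.mp h2 with h | h
        · exact Or.inr h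
        · exact Or.inl (by linarith)
      · intro h
        have h2 : c ≤ |z| := by
          rcases h with h | h
        <;> [exact le_abs.mpr (Or.inr (by linarith)); exact le_abs.mpr (Or.inl h)]
        have h1 : Phi c ≤ Phi |z| := Phi_mono h2
        rw [hPc] at h1
        unfold fg
        linarith
    have hdisj : Disjoint (Iic (-c)) (Ici c) := by
      refine Set.disjoint_left.mpr fun z hz hz' => ?_
      simp only [Set.mem_Iic] at hz
      simp only [Set.mem_Ici] at hz'
      linarith
    have hIic : gaussianReal 0 1 (Iic c) = ENNReal.ofReal (1 - t/2) := by
      rw [← hPc]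
      exact (ENNReal.ofReal_toReal (measure_ne_top _ _)).symm
    have hIci : gaussianReal 0 1 (Ici c) = ENNReal.ofReal (t/2) := by
      rw [gauss_Ici, hIic, ← ENNReal.ofReal_one, ← ENNReal.ofReal_sub _ (by linarith)]
      norm_num
    rw [hset, measure_union hdisj measurableSet_Ici, gauss_neg, hIci,
      ← ENNReal.ofReal_add (by linarith) (by linarith), min_eq_left ht1.le]
    norm_num


variable {m : ℕ}

abbrev PairNe (m : ℕ) := {q : Fin m × Fin m // q.1 ≠ q.2}

instance {n : ℕ} : Nonempty (PairNe (n+2)) :=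
  ⟨⟨(0, 1), by simp [Fin.ext_iff]⟩⟩

noncomputable def S1 (u : Fin m → ℝ) : ℝ := sInf {y | ∃ i, y = u i}
noncomputable def S2 (u : Fin m → ℝ) : ℝ :=
  sInf {y | ∃ i j, i ≠ j ∧ y = max (u i) (u j)}
noncomputable def hfun (u : Fin m → ℝ) : ℝ := S1 u / S2 u

lemma set1_eq (u : Fin m → ℝ) : {y | ∃ i, y = u i} = Set.range u := by
  ext y; simp [eq_comm]

lemma set2_eq (u : Fin m → ℝ) :
    {y | ∃ i j, i ≠ j ∧ y = max (u i) (u j)} =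
      Set.range (fun q : PairNe m => max (u q.1.1) (u q.1.2)) := by
  ext y
  constructor
  · rintro ⟨i, j, hij, rfl⟩; exact ⟨⟨(i, j), hij⟩, rfl⟩
  · rintro ⟨⟨⟨i, j⟩, hij⟩, rfl⟩; exact ⟨i, j, hij, rfl⟩

lemma S1_eq_iInf (u : Fin m → ℝ) : S1 u = ⨅ i, u i := by
  rw [S1, set1_eq]; rfl

lemma S2_eq_iInf (u : Fin m → ℝ) :
    S2 u = ⨅ q : PairNe m, max (u q.1.1) (u q.1.2) := by
  rw [S2, set2_eq]; rfl

section nonemp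
variable [NeZero m]

lemma S1_le (u : Fin m → ℝ) (i : Fin m) : S1 u ≤ u i := by
  rw [S1, set1_eq]
  exact csInf_le (finite_range u).bddBelow ⟨i, rfl⟩

lemma S1_mem (u : Fin m → ℝ) : ∃ i, S1 u = u i := by
  rw [S1, set1_eq]
  have := Set.Nonempty.csInf_mem (range_nonempty u) (finite_range u)
  obtain ⟨i, hi⟩ := this
  exact ⟨i, hi.symm⟩

lemma S1_eq_of_min {u : Fin m → ℝ} {i : Fin m} (hmin : ∀ j, j ≠ i → u i < u j) :
    S1 u = u i := by
  obtain ⟨i', hi'⟩ := S1_mem u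
  rcases eq_or_ne i' i with rfl | hne
  · exact hi'
  · have h1 := S1_le u i
    have h2 := hmin i' hne
    linarith [hi' ▸ h1]

end nonemp

section pairs
variable {n : ℕ}

lemma S2_le (u : Fin (n+2) → ℝ) {i j : Fin (n+2)} (hij : i ≠ j) :
    S2 u ≤ max (u i) (u j) := by
  rw [S2, set2_eq]
  exact csInf_le (finite_range _).bddBelow ⟨⟨(i, j), hij⟩, rfl⟩

lemma S2_mem (u : Fin (n+2) → ℝ) : ∃ i j, i ≠ j ∧ S2 u = max (u i) (u j) := by
  rw [S2, set2_eq]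
  obtain ⟨⟨⟨i, j⟩, hij⟩, h⟩ :=
    Set.Nonempty.csInf_mem (range_nonempty fun q : PairNe (n+2) => max (u q.1.1) (u q.1.2))
      (finite_range _)
  exact ⟨i, j, hij, h.symm⟩

lemma S1_le_S2 (u : Fin (n+2) → ℝ) : S1 u ≤ S2 u := by
  rw [S2, set2_eq]
  refine le_csInf (range_nonempty _) ?_
  rintro y ⟨⟨⟨i, j⟩, hij⟩, rfl⟩
  exact (S1_le u i).trans (le_max_left _ _)

/-- min over the coordinates of `v`. -/
noncomputable def Mn (v : Fin (n+1) → ℝ) : ℝ := ⨅ k, v k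

lemma Mn_le (v : Fin (n+1) → ℝ) (k : Fin (n+1)) : Mn v ≤ v k :=
  ciInf_le (finite_range v).bddBelow k

lemma Mn_mem (v : Fin (n+1) → ℝ) : ∃ k, Mn v = v k := by
  obtain ⟨k, hk⟩ := exists_eq_ciInf_of_finite (f := v)
  exact ⟨k, hk.symm⟩

lemma le_Mn_iff {v : Fin (n+1) → ℝ} {s : ℝ} : s ≤ Mn v ↔ ∀ k, s ≤ v k :=
  le_ciInf_iff (finite_range v).bddBelow

lemma Mn_measurable : Measurable (Mn (n := n)) :=
  Measurable.iInf fun k => measurable_pi_apply k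

/-- min over coordinates other than `i`. -/
noncomputable def Mi (i : Fin (n+2)) (u : Fin (n+2) → ℝ) : ℝ :=
  Mn (fun k => u (i.succAbove k))

lemma Mi_le (i : Fin (n+2)) (u : Fin (n+2) → ℝ) {j : Fin (n+2)} (hj : j ≠ i) :
    Mi i u ≤ u j := by
  obtain ⟨k, hk⟩ := Fin.exists_succAbove_eq hj
  rw [← hk]
  exact Mn_le _ k

lemma Mi_mem (i : Fin (n+2)) (u : Fin (n+2) → ℝ) :
    ∃ j, j ≠ i ∧ Mi i u = u j := by
  obtain ⟨k, hk⟩ := Mn_mem (fun k => u (i.succAbove k))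
  exact ⟨i.succAbove k, Fin.succAbove_ne i k, hk⟩

lemma S2_eq_Mi {u : Fin (n+2) → ℝ} {i : Fin (n+2)}
    (hmin : ∀ j, j ≠ i → u i < u j) : S2 u = Mi i u := by
  apply le_antisymm
  · obtain ⟨j, hj, hjv⟩ := Mi_mem i u
    have h1 : S2 u ≤ max (u j) (u i) := S2_le u hj
    rw [max_eq_left (hmin j hj).le] at h1
    rw [hjv]
    exact h1
  · obtain ⟨a, b, hab, hS2⟩ := S2_mem u
    rw [hS2]
    by_cases ha : a = i
    · have hb : b ≠ i := fun h => hab (ha.trans h.symm)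
      exact (Mi_le i u hb).trans (le_max_right _ _)
    · exact (Mi_le i u ha).trans (le_max_left _ _)

lemma S1_measurable : Measurable (S1 (m := m)) := by
  have : S1 (m := m) = fun u => ⨅ i, u i := funext S1_eq_iInf
  rw [this]
  exact Measurable.iInf fun i => measurable_pi_apply i

lemma S2_measurable : Measurable (S2 (m := m)) := by
  have : S2 (m := m) = fun u => ⨅ q : PairNe m, max (u q.1.1) (u q.1.2) :=
    funext S2_eq_iInf
  rw [this]
  exact Measurable.iInf fun q => (measurable_pi_apply _).max (measurable_pi_apply _)

lemma hfun_measurable : Measurable (hfun (m := m)) :=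
  S1_measurable.div S2_measurable

end pairs

lemma psi_sSup {s : Set ℝ} (hne : s.Nonempty) (hfin : s.Finite)
    {ψ : ℝ → ℝ} (hψ : Antitone ψ) : ψ (sSup s) = sInf (ψ '' s) := by
  apply le_antisymm
  · refine le_csInf (hne.image ψ) ?_
    rintro y ⟨x, hx, rfl⟩
    exact hψ (le_csSup hfin.bddAbove hx)
  · exact csInf_le (hfin.image ψ).bddBelow ⟨_, hne.csSup_mem hfin, rfl⟩



section Cube

variable {n : ℕ}

noncomputable abbrev lu : Measure ℝ := volume.restrict (Icc (0:ℝ) 1)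

lemma lu_Icc01 : lu (Icc (0:ℝ) 1) = 1 := by
  rw [Measure.restrict_apply measurableSet_Icc, inter_self, Real.volume_Icc]; norm_num

lemma lu_Ioo01 : lu (Ioo (0:ℝ) 1) = 1 := by
  rw [Measure.restrict_apply measurableSet_Ioo,
    inter_eq_self_of_subset_left Ioo_subset_Icc_self, Real.volume_Ioo]
  norm_num

lemma lu_singleton (a : ℝ) : lu {a} = 0 := by
  apply le_antisymm _ zero_le
  rw [Measure.restrict_apply (measurableSet_singleton a)]
  exact le_trans (measure_mono inter_subset_left) (by simp)

lemma lu_Ici {s : ℝ} (hs : 0 < s) : lu (Ici s) = ENNReal.ofReal (1 - s) := by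
  rw [Measure.restrict_apply measurableSet_Ici]
  have h : Ici s ∩ Icc (0:ℝ) 1 = Icc s 1 := by
    ext x
    simp only [mem_inter_iff, mem_Ici, mem_Icc]
    constructor
    · rintro ⟨h1, _, h3⟩; exact ⟨h1, h3⟩
    · rintro ⟨h1, h2⟩; exact ⟨h1, le_trans hs.le h1, h2⟩
  rw [h, Real.volume_Icc]

lemma ae_cube {m : ℕ} :
    ∀ᵐ v ∂(Measure.pi fun _ : Fin m => lu), ∀ k, v k ∈ Icc (0:ℝ) 1 := by
  have hmeas : MeasurableSet (univ.pi fun _ : Fin m => Icc (0:ℝ) 1) :=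
    MeasurableSet.univ_pi fun _ => measurableSet_Icc
  have h1 : (Measure.pi fun _ : Fin m => lu) (univ.pi fun _ : Fin m => Icc (0:ℝ) 1) = 1 := by
    rw [Measure.pi_pi]; simp [lu_Icc01]
  have h0 := (prob_compl_eq_zero_iff hmeas).2 h1
  rw [ae_iff]
  refine measure_mono_null ?_ h0
  intro v hv
  simp only [mem_setOf_eq, not_forall] at hv
  simp only [mem_compl_iff, mem_univ_pi, not_forall]
  obtain ⟨k, hk⟩ := hv
  exact ⟨k, hk⟩

lemma pi_tie_null (i j : Fin (n+2)) (hij : i ≠ j) :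
    Measure.pi (fun _ : Fin (n+2) => lu) {u | u i = u j} = 0 := by
  obtain ⟨k₀, hk₀⟩ := Fin.exists_succAbove_eq hij.symm
  set e := MeasurableEquiv.piFinSuccAbove (fun _ : Fin (n+2) => ℝ) i with he
  have hmp := measurePreserving_piFinSuccAbove (fun _ : Fin (n+2) => lu) i
  set T : Set (ℝ × (Fin (n+1) → ℝ)) := {y | y.1 = y.2 k₀} with hTdef
  have hT : MeasurableSet T :=
    measurableSet_eq_fun measurable_fst ((measurable_pi_apply k₀).comp measurable_snd)
  have hpre : e ⁻¹' T = {u | u i = u j} := by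
    ext u
    simp only [hTdef, mem_preimage, mem_setOf_eq, he, MeasurableEquiv.piFinSuccAbove_apply,
      Fin.insertNthEquiv_symm_apply, Fin.removeNth]
    rw [hk₀]
  rw [← hpre, ← Measure.map_apply e.measurable hT, hmp.map_eq, Measure.prod_apply hT]
  have hz : ∀ x : ℝ, (Measure.pi fun _ : Fin (n+1) => lu) (Prod.mk x ⁻¹' T) = 0 := by
    intro x
    have hsub : Prod.mk x ⁻¹' T ⊆
        univ.pi (fun k : Fin (n+1) => if k = k₀ then ({x} : Set ℝ) else univ) := by
      intro v hv
      simp only [hTdef, mem_preimage, mem_setOf_eq] at hv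
      intro k _
      by_cases hk : k = k₀
      · subst hk; simp [← hv]
      · simp [hk]
    refine measure_mono_null hsub ?_
    rw [Measure.pi_pi]
    refine Finset.prod_eq_zero (Finset.mem_univ k₀) ?_
    simp [lu_singleton]
  simp [hz]

lemma lintegral_Mn :
    ∫⁻ v, ENNReal.ofReal (Mn v) ∂(Measure.pi fun _ : Fin (n+1) => lu)
      = ENNReal.ofReal (1 / (n+2)) := by
  set π' := Measure.pi fun _ : Fin (n+1) => lu with hπ'
  have hnn : 0 ≤ᵐ[π'] Mn := by
    filter_upwards [ae_cube] with v hv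
    obtain ⟨k, hk⟩ := Mn_mem v
    rw [hk]
    exact (hv k).1
  rw [lintegral_eq_lintegral_meas_le π' hnn Mn_measurable.aemeasurable]
  have hval : ∀ s ∈ Ioi (0:ℝ),
      π' {v | s ≤ Mn v} = (ENNReal.ofReal (1-s))^(n+1) := by
    intro s hs
    have hset : {v : Fin (n+1) → ℝ | s ≤ Mn v} = univ.pi (fun _ : Fin (n+1) => Ici s) := by
      ext v
      simp only [mem_setOf_eq, mem_univ_pi, mem_Ici]
      exact le_Mn_iff
    rw [hset, hπ', Measure.pi_pi, lu_Ici hs]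
    simp [Finset.prod_const]
  rw [setLIntegral_congr_fun measurableSet_Ioi hval]
  rw [← Ioc_union_Ioi_eq_Ioi (zero_le_one (α := ℝ)),
    lintegral_union measurableSet_Ioi (Ioc_disjoint_Ioi le_rfl)]
  have h2 : ∫⁻ s in Ioi (1:ℝ), (ENNReal.ofReal (1-s))^(n+1) = 0 := by
    have hzero : ∀ s ∈ Ioi (1:ℝ), (ENNReal.ofReal (1-s))^(n+1) = (0:ℝ≥0∞) := by
      intro s hs
      rw [mem_Ioi] at hs
      rw [ENNReal.ofReal_of_nonpos (by linarith), zero_pow (Nat.succ_ne_zero n)]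
    rw [setLIntegral_congr_fun measurableSet_Ioi hzero, lintegral_zero]
  have h1 : ∫⁻ s in Ioc (0:ℝ) 1, (ENNReal.ofReal (1-s))^(n+1)
      = ENNReal.ofReal (1/(n+2)) := by
    have hcong : ∀ s ∈ Ioc (0:ℝ) 1,
        (ENNReal.ofReal (1-s))^(n+1) = ENNReal.ofReal ((1-s)^(n+1)) := by
      intro s hs
      exact (ENNReal.ofReal_pow (by linarith [hs.2]) _).symm
    rw [setLIntegral_congr_fun measurableSet_Ioc hcong]
    have hint : Integrable (fun s => (1-s)^(n+1)) (volume.restrict (Ioc (0:ℝ) 1)) := by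
      have hc : Continuous fun s : ℝ => (1-s)^(n+1) :=
        (continuous_const.sub continuous_id).pow _
      exact (hc.integrableOn_Icc (a := 0) (b := 1)).mono_set Ioc_subset_Icc_self
    have hnn2 : 0 ≤ᵐ[volume.restrict (Ioc (0:ℝ) 1)] fun s => (1-s)^(n+1) := by
      refine (ae_restrict_iff' measurableSet_Ioc).2 (ae_of_all _ fun s hs => ?_)
      exact pow_nonneg (by linarith [hs.2]) _
    rw [← ofReal_integral_eq_lintegral_ofReal hint hnn2]
    congr 1
    have heq : ∫ s in Ioc (0:ℝ) 1, (1-s)^(n+1) = ∫ s in (0:ℝ)..1, (1-s)^(n+1) :=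
      (intervalIntegral.integral_of_le zero_le_one).symm
    rw [heq, intervalIntegral.integral_comp_sub_left (fun x => x^(n+1)) 1,
      show (1:ℝ)-1 = 0 by norm_num, show (1:ℝ)-0 = 1 by norm_num, integral_pow]
    rw [one_pow, zero_pow (Nat.succ_ne_zero (n+1)), sub_zero]
    push_cast
    ring
  rw [h1, h2, add_zero]

lemma measure_B {t : ℝ} (ht0 : 0 ≤ t) (ht1 : t < 1) (i : Fin (n+2)) :
    Measure.pi (fun _ : Fin (n+2) => lu) {u | u i ≤ t * Mi i u}
      = ENNReal.ofReal t * ENNReal.ofReal (1/(n+2)) := by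
  set π' := Measure.pi fun _ : Fin (n+1) => lu with hπ'
  set e := MeasurableEquiv.piFinSuccAbove (fun _ : Fin (n+2) => ℝ) i with he
  have hmp := measurePreserving_piFinSuccAbove (fun _ : Fin (n+2) => lu) i
  set T : Set (ℝ × (Fin (n+1) → ℝ)) := {y | y.1 ≤ t * Mn y.2} with hTdef
  have hT : MeasurableSet T := measurableSet_le measurable_fst
    ((measurable_const.mul Mn_measurable).comp measurable_snd)
  have hpre : e ⁻¹' T = {u | u i ≤ t * Mi i u} := by
    ext u
    simp only [hTdef, mem_preimage, mem_setOf_eq, he, MeasurableEquiv.piFinSuccAbove_apply,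
      Fin.insertNthEquiv_symm_apply, Fin.removeNth, Mi]
    exact Iff.rfl
  rw [← hpre, ← Measure.map_apply e.measurable hT, hmp.map_eq, Measure.prod_apply_symm hT]
  have hIic : ∀ v : Fin (n+1) → ℝ,
      lu ((fun x => (x, v)) ⁻¹' T) = ENNReal.ofReal (min (t * Mn v) 1) := by
    intro v
    have hslice : ((fun x : ℝ => (x, v)) ⁻¹' T) = Iic (t * Mn v) := by
      ext x; simp [hTdef]
    rw [hslice]
    exact lunif_Iic _
  simp_rw [hIic]
  have hcong : ∀ᵐ v ∂π',
      ENNReal.ofReal (min (t * Mn v) 1) = ENNReal.ofReal t * ENNReal.ofReal (Mn v) := by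
    filter_upwards [ae_cube] with v hv
    obtain ⟨k, hk⟩ := Mn_mem v
    have h0 : 0 ≤ Mn v := by rw [hk]; exact (hv k).1
    have h1 : Mn v ≤ 1 := by rw [hk]; exact (hv k).2
    have h2 : t * Mn v ≤ 1 := by nlinarith
    rw [min_eq_left h2, ENNReal.ofReal_mul ht0]
  rw [lintegral_congr_ae hcong, lintegral_const_mul _ Mn_measurable.ennreal_ofReal,
    lintegral_Mn]

lemma hfun_def {m : ℕ} (u : Fin m → ℝ) : hfun u = S1 u / S2 u := rfl

lemma main_count {t : ℝ} (ht0 : 0 ≤ t) (ht1 : t < 1) :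
    Measure.pi (fun _ : Fin (n+2) => lu) {u | hfun u ≤ t} = ENNReal.ofReal t := by
  set π := Measure.pi (fun _ : Fin (n+2) => lu) with hπ
  set D : Set (Fin (n+2) → ℝ) := {u | ∀ i j, i ≠ j → u i ≠ u j} with hD
  set O : Set (Fin (n+2) → ℝ) := univ.pi fun _ => Ioo (0:ℝ) 1 with hO
  have hDmeas : MeasurableSet D := by
    have hrw : D = ⋂ i, ⋂ j, {u : Fin (n+2) → ℝ | i ≠ j → u i ≠ u j} := by
      ext u; simp [hD]
    rw [hrw]
    refine MeasurableSet.iInter fun i => MeasurableSet.iInter fun j => ?_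
    by_cases hij : i = j
    · have : {u : Fin (n+2) → ℝ | i ≠ j → u i ≠ u j} = univ := by ext u; simp [hij]
      rw [this]; exact MeasurableSet.univ
    · have : {u : Fin (n+2) → ℝ | i ≠ j → u i ≠ u j} = {u : Fin (n+2) → ℝ | u i = u j}ᶜ := by
        ext u; simp [hij]
      rw [this]
      exact (measurableSet_eq_fun (measurable_pi_apply i) (measurable_pi_apply j)).compl
  have hOmeas : MeasurableSet O := MeasurableSet.univ_pi fun _ => measurableSet_Ioo
  set G := O ∩ D with hG
  have hGmeas : MeasurableSet G := hOmeas.inter hDmeas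
  have hGc : π Gᶜ = 0 := by
    rw [hG, Set.compl_inter]
    refine measure_union_null ?_ ?_
    · refine (prob_compl_eq_zero_iff hOmeas).2 ?_
      rw [hO, hπ, Measure.pi_pi, Finset.prod_const, lu_Ioo01, one_pow]
    · have hsub : Dᶜ ⊆ ⋃ i, ⋃ j, {u : Fin (n+2) → ℝ | i ≠ j ∧ u i = u j} := by
        intro u hu
        simp only [hD, mem_compl_iff, mem_setOf_eq, not_forall] at hu
        obtain ⟨i, j, hij⟩ := hu
        simp only [mem_iUnion, mem_setOf_eq]
        push_neg at hij
        exact ⟨i, j, hij.1, hij.2⟩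
      refine measure_mono_null hsub
        (measure_iUnion_null fun i => measure_iUnion_null fun j => ?_)
      by_cases hij : i ≠ j
      · exact measure_mono_null (fun u hu => hu.2) (pi_tie_null i j hij)
      · have : {u : Fin (n+2) → ℝ | i ≠ j ∧ u i = u j} = ∅ := by
          ext u; simp only [mem_setOf_eq, mem_empty_iff_false, iff_false]
          exact fun hc => hij hc.1
        rw [this]; exact measure_empty
  have hfull : ∀ B : Set (Fin (n+2) → ℝ), π (B ∩ G) = π B := by
    intro B
    have h0 : π (B \ G) = 0 := measure_mono_null (fun u hu => hu.2) hGc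
    calc π (B ∩ G) = π (B ∩ G) + π (B \ G) := by rw [h0, add_zero]
      _ = π B := measure_inter_add_diff B hGmeas
  have hGpos : ∀ u ∈ G, ∀ k, 0 < u k ∧ u k < 1 := by
    intro u hu k
    have := hu.1 k (mem_univ _)
    exact ⟨this.1, this.2⟩
  have hGne : ∀ u ∈ G, ∀ i j, i ≠ j → u i ≠ u j := fun u hu => hu.2
  have hMipos : ∀ u ∈ G, ∀ i, 0 < Mi i u := by
    intro u hu i
    obtain ⟨j, hj, hjv⟩ := Mi_mem i u
    rw [hjv]
    exact (hGpos u hu j).1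
  have hcover : {u | hfun u ≤ t} ∩ G = (⋃ i, {u : Fin (n+2) → ℝ | u i ≤ t * Mi i u}) ∩ G := by
    ext u
    constructor
    · rintro ⟨hle, hGu⟩
      refine ⟨?_, hGu⟩
      obtain ⟨i, hi⟩ := S1_mem u
      have hmin : ∀ j, j ≠ i → u i < u j := by
        intro j hj
        have h1 : u i ≤ u j := hi ▸ S1_le u j
        rcases lt_or_eq_of_le h1 with h | h
        · exact h
        · exact absurd h (hGne u hGu i j (Ne.symm hj))
      have hS2 : S2 u = Mi i u := S2_eq_Mi hmin
      have hMp := hMipos u hGu i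
      simp only [mem_setOf_eq] at hle
      rw [hfun_def, hi, hS2] at hle
      simp only [mem_iUnion, mem_setOf_eq]
      exact ⟨i, (div_le_iff₀ hMp).1 hle⟩
    · rintro ⟨hmem, hGu⟩
      refine ⟨?_, hGu⟩
      simp only [mem_iUnion, mem_setOf_eq] at hmem
      obtain ⟨i, hi⟩ := hmem
      have hMp := hMipos u hGu i
      have hlt : u i < Mi i u := lt_of_le_of_lt hi (by nlinarith)
      have hmin : ∀ j, j ≠ i → u i < u j := fun j hj =>
        lt_of_lt_of_le hlt (Mi_le i u hj)
      have hS1 : S1 u = u i := S1_eq_of_min hmin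
      have hS2 : S2 u = Mi i u := S2_eq_Mi hmin
      simp only [mem_setOf_eq]
      rw [hfun_def, hS1, hS2]
      exact (div_le_iff₀ hMp).2 hi
  have hdisj : Pairwise (Function.onFun Disjoint fun i : Fin (n+2) =>
      {u : Fin (n+2) → ℝ | u i ≤ t * Mi i u} ∩ G) := by
    intro i j hij
    refine Set.disjoint_left.mpr fun u hui huj => ?_
    obtain ⟨hi, hGu⟩ := hui
    obtain ⟨hj, _⟩ := huj
    simp only [mem_setOf_eq] at hi hj
    have hMpi := hMipos u hGu i
    have hMpj := hMipos u hGu j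
    have h1 : u i < Mi i u := lt_of_le_of_lt hi (by nlinarith)
    have h2 : u j < Mi j u := lt_of_le_of_lt hj (by nlinarith)
    have h3 : u i < u j := lt_of_lt_of_le h1 (Mi_le i u (Ne.symm hij))
    have h4 : u j < u i := lt_of_lt_of_le h2 (Mi_le j u hij)
    linarith
  have hBmeas : ∀ i : Fin (n+2),
      MeasurableSet {u : Fin (n+2) → ℝ | u i ≤ t * Mi i u} := fun i =>
    measurableSet_le (measurable_pi_apply i)
      (measurable_const.mul (Mn_measurable.comp
        (measurable_pi_lambda _ fun k => measurable_pi_apply _)))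
  calc π {u | hfun u ≤ t} = π ({u | hfun u ≤ t} ∩ G) := (hfull _).symm
    _ = π ((⋃ i, {u : Fin (n+2) → ℝ | u i ≤ t * Mi i u}) ∩ G) := by rw [hcover]
    _ = π (⋃ i, ({u : Fin (n+2) → ℝ | u i ≤ t * Mi i u} ∩ G)) := by rw [Set.iUnion_inter]
    _ = ∑' i : Fin (n+2), π ({u : Fin (n+2) → ℝ | u i ≤ t * Mi i u} ∩ G) :=
        measure_iUnion hdisj (fun i => (hBmeas i).inter hGmeas)
    _ = ∑' _i : Fin (n+2), ENNReal.ofReal t * ENNReal.ofReal (1/(n+2)) := by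
        refine tsum_congr fun i => ?_
        rw [hfull, hπ, measure_B ht0 ht1 i]
    _ = ENNReal.ofReal t := by
        rw [tsum_fintype, Finset.sum_const, Finset.card_univ, Fintype.card_fin, nsmul_eq_mul]
        rw [mul_comm (ENNReal.ofReal t) _, ← mul_assoc, ← ENNReal.ofReal_natCast (n+2),
          ← ENNReal.ofReal_mul (by positivity)]
        have : ((n:ℝ)+2) * (1/((n:ℝ)+2)) = 1 := mul_one_div_cancel (by positivity)
        push_cast
        rw [this, ENNReal.ofReal_one, one_mul]

lemma map_hfun : Measure.map (hfun (m := n+2)) (Measure.pi fun _ : Fin (n+2) => lu) = lu := by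
  set π := Measure.pi (fun _ : Fin (n+2) => lu) with hπ
  have hpm : IsProbabilityMeasure (Measure.map (hfun (m := n+2)) π) :=
    Measure.isProbabilityMeasure_map hfun_measurable.aemeasurable
  refine Measure.ext_of_Iic _ _ fun t => ?_
  rw [Measure.map_apply hfun_measurable measurableSet_Iic, lunif_Iic]
  have hcubeM : MeasurableSet (univ.pi fun _ : Fin (n+2) => Icc (0:ℝ) 1) :=
    MeasurableSet.univ_pi fun _ => measurableSet_Icc
  have hcube1 : π (univ.pi fun _ : Fin (n+2) => Icc (0:ℝ) 1) = 1 := by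
    rw [hπ, Measure.pi_pi]; simp [lu_Icc01]
  rcases lt_or_ge t 0 with ht | ht
  · have hsub : hfun ⁻¹' Iic t ⊆ (univ.pi fun _ : Fin (n+2) => Icc (0:ℝ) 1)ᶜ := by
      intro u hu hmem
      simp only [mem_preimage, mem_Iic] at hu
      have h1 : 0 ≤ S1 u := by
        obtain ⟨i, hi⟩ := S1_mem u
        rw [hi]
        exact (hmem i (mem_univ _)).1
      have h2 : 0 ≤ S2 u := le_trans h1 (S1_le_S2 u)
      have h3 : 0 ≤ hfun u := div_nonneg h1 h2
      rw [hfun_def] at hu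
      rw [hfun_def] at h3
      linarith
    have h0 := measure_mono_null hsub ((prob_compl_eq_zero_iff hcubeM).2 hcube1)
    rw [h0, Eq.comm, ENNReal.ofReal_eq_zero]
    exact le_trans (min_le_left _ _) ht.le
  rcases le_or_gt 1 t with ht1 | ht1
  · have hsub : (univ.pi fun _ : Fin (n+2) => Icc (0:ℝ) 1) ⊆ hfun ⁻¹' Iic t := by
      intro u hmem
      simp only [mem_preimage, mem_Iic]
      have h1 : 0 ≤ S1 u := by
        obtain ⟨i, hi⟩ := S1_mem u
        rw [hi]
        exact (hmem i (mem_univ _)).1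
      have h2 : S1 u ≤ S2 u := S1_le_S2 u
      have h3 : hfun u ≤ 1 := by
        rcases eq_or_lt_of_le (le_trans h1 h2) with heq | hlt
        · rw [hfun_def, ← heq, div_zero]
          exact zero_le_one
        · rw [hfun_def]
          exact (div_le_one hlt).2 h2
      linarith
    have hle := measure_mono (μ := π) hsub
    rw [hcube1] at hle
    have h1 : π (hfun ⁻¹' Iic t) = 1 := le_antisymm prob_le_one hle
    rw [h1, min_eq_right ht1, ENNReal.ofReal_one]
  · have : hfun ⁻¹' Iic t = {u : Fin (n+2) → ℝ | hfun u ≤ t} := rfl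
    rw [this, main_count ht ht1, min_eq_left ht1.le]

end Cube


section Final

lemma anti_psi : Antitone (fun x : ℝ => 2 * (1 - Phi x)) := fun x y h => by
  have := Phi_mono h
  dsimp only
  linarith

lemma pointwise_eq {n : ℕ} (a : Fin (n+2) → ℝ) :
    (1 - Phi (sSup {x : ℝ | ∃ i, x = a i})) /
      (1 - Phi (sSup {x : ℝ | ∃ i j, i ≠ j ∧ x = min (a i) (a j)}))
      = hfun (fun i => 2 * (1 - Phi (a i))) := by
  set ψ : ℝ → ℝ := fun x => 2 * (1 - Phi x) with hψdef
  have hψ : Antitone ψ := anti_psi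
  have hnum : ψ (sSup {x : ℝ | ∃ i, x = a i}) = S1 (fun i => ψ (a i)) := by
    rw [set1_eq a, psi_sSup (range_nonempty a) (finite_range a) hψ]
    rw [S1, set1_eq, ← Set.range_comp]
    rfl
  have hs2 : {x : ℝ | ∃ i j, i ≠ j ∧ x = min (a i) (a j)} =
      Set.range (fun q : PairNe (n+2) => min (a q.1.1) (a q.1.2)) := by
    ext y
    constructor
    · rintro ⟨i, j, hij, rfl⟩; exact ⟨⟨(i, j), hij⟩, rfl⟩
    · rintro ⟨⟨⟨i, j⟩, hij⟩, rfl⟩; exact ⟨i, j, hij, rfl⟩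
  have himg : ψ '' Set.range (fun q : PairNe (n+2) => min (a q.1.1) (a q.1.2))
      = Set.range (fun q : PairNe (n+2) => max (ψ (a q.1.1)) (ψ (a q.1.2))) := by
    rw [← Set.range_comp]
    have hfu : (ψ ∘ fun q : PairNe (n+2) => min (a q.1.1) (a q.1.2))
        = fun q : PairNe (n+2) => max (ψ (a q.1.1)) (ψ (a q.1.2)) := by
      funext q
      exact hψ.map_min
    rw [hfu]
  have hden : ψ (sSup {x : ℝ | ∃ i j, i ≠ j ∧ x = min (a i) (a j)})
      = S2 (fun i => ψ (a i)) := by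
    rw [hs2, psi_sSup (range_nonempty _) (finite_range _) hψ, himg]
    rw [S2, set2_eq]
  rw [hfun_def, ← hnum, ← hden, hψdef]
  dsimp only
  rw [mul_div_mul_left _ _ (two_ne_zero)]

lemma map_vec {n : ℕ} {Ω : Type*} [MeasurableSpace Ω] (μpr : Measure Ω)
    [IsProbabilityMeasure μpr]
    (Z : Fin (n+2) → Ω → ℝ) (hmeas : ∀ i, Measurable (Z i))
    (hind : iIndepFun Z μpr)
    (hdist : ∀ i, Measure.map (Z i) μpr = gaussianReal 0 1) :
    Measure.map (fun ω i => Z i ω) μpr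
      = Measure.pi fun _ : Fin (n+2) => gaussianReal 0 1 := by
  have hv : Measurable (fun ω (i : Fin (n+2)) => Z i ω) := measurable_pi_lambda _ hmeas
  refine Eq.symm (Measure.pi_eq fun s hs => ?_)
  rw [Measure.map_apply hv (MeasurableSet.univ_pi hs)]
  have hpre : (fun ω (i : Fin (n+2)) => Z i ω) ⁻¹' univ.pi s = ⋂ i, Z i ⁻¹' s i := by
    ext ω
    simp only [mem_preimage, mem_univ_pi, mem_iInter]
  rw [hpre, hind.meas_iInter fun i => ⟨s i, hs i, rfl⟩]
  refine Finset.prod_congr rfl fun i _ => ?_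
  rw [← hdist i, Measure.map_apply (hmeas i) (hs i)]

lemma map_F {n : ℕ} :
    Measure.map (fun (v : Fin (n+2) → ℝ) i => fg (v i))
        (Measure.pi fun _ : Fin (n+2) => gaussianReal 0 1)
      = Measure.pi fun _ : Fin (n+2) => lu := by
  have hF : Measurable fun (v : Fin (n+2) → ℝ) i => fg (v i) :=
    measurable_pi_lambda _ fun i => fg_meas.comp (measurable_pi_apply i)
  refine Eq.symm (Measure.pi_eq fun s hs => ?_)
  rw [Measure.map_apply hF (MeasurableSet.univ_pi hs)]
  have hpre : (fun (v : Fin (n+2) → ℝ) i => fg (v i)) ⁻¹' univ.pi s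
      = univ.pi fun i => fg ⁻¹' s i := by
    ext v
    simp only [mem_preimage, mem_univ_pi]
  rw [hpre, Measure.pi_pi]
  refine Finset.prod_congr rfl fun i _ => ?_
  show (gaussianReal 0 1) (fg ⁻¹' s i) = (volume.restrict (Icc 0 1)) (s i)
  rw [← map_fg]
  exact (Measure.map_apply fg_meas (hs i)).symm

end Final

end KacRiceAux

open MeasureTheory ProbabilityTheory

/-- For `Z₁, …, Z_p` i.i.d. standard normal (`p ≥ 2`), with `Z_(1) ≥ Z_(2)` the two
largest order statistics of `(|Z₁|, …, |Z_p|)`, the Kac–Rice statistic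
`(1 − Φ(Z_(1)))/(1 − Φ(Z_(2)))` is uniform on `[0,1]`. -/
theorem kac_rice_orthonormal_uniform {p : ℕ} (hp : 2 ≤ p)
    {Ω : Type*} [MeasurableSpace Ω] (μpr : Measure Ω) [IsProbabilityMeasure μpr]
    (Z : Fin p → Ω → ℝ) (hmeas : ∀ i, Measurable (Z i))
    (hind : iIndepFun Z μpr)
    (hdist : ∀ i, Measure.map (Z i) μpr = gaussianReal 0 1) :
    Measure.map (fun ω =>
        (1 - ((gaussianReal 0 1)
            (Set.Iic (sSup {x : ℝ | ∃ i : Fin p, x = |Z i ω|}))).toReal) /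
        (1 - ((gaussianReal 0 1)
            (Set.Iic (sSup {x : ℝ | ∃ i j : Fin p, i ≠ j ∧
              x = min |Z i ω| |Z j ω|}))).toReal)) μpr
      = volume.restrict (Set.Icc (0 : ℝ) 1) := by
  obtain ⟨n, rfl⟩ : ∃ n, p = n + 2 := ⟨p - 2, by omega⟩
  have hvec : Measurable (fun ω (i : Fin (n+2)) => Z i ω) :=
    measurable_pi_lambda _ hmeas
  have hF : Measurable fun (v : Fin (n+2) → ℝ) i => KacRiceAux.fg (v i) :=
    measurable_pi_lambda _ fun i => KacRiceAux.fg_meas.comp (measurable_pi_apply i)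
  have hfe : (fun ω =>
        (1 - ((gaussianReal 0 1)
            (Set.Iic (sSup {x : ℝ | ∃ i : Fin (n+2), x = |Z i ω|}))).toReal) /
        (1 - ((gaussianReal 0 1)
            (Set.Iic (sSup {x : ℝ | ∃ i j : Fin (n+2), i ≠ j ∧
              x = min |Z i ω| |Z j ω|}))).toReal))
      = (KacRiceAux.hfun (m := n+2)) ∘
          ((fun (v : Fin (n+2) → ℝ) i => KacRiceAux.fg (v i)) ∘ (fun ω i => Z i ω)) := by
    funext ω
    exact KacRiceAux.pointwise_eq (fun i => |Z i ω|)
  rw [hfe, ← Measure.map_map KacRiceAux.hfun_measurable (hF.comp hvec),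
    ← Measure.map_map hF hvec,
    KacRiceAux.map_vec μpr Z hmeas hind hdist, KacRiceAux.map_F, KacRiceAux.map_hfun]
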